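/- For all positive integers t and u there exist constants α = α(t,u) > 0 and β = β(u) > 0 (β depending only on u) such that for every positive integer n, every semilinear* graph of complexity (t,u) with more than α·n^β vertices contains a clique of size n or an independent set of size n. (Equivalently, R_{t,u}(n) ≤ α·n^β.) -/

import Mathlib

/-- `f : ℝ^d × ℝ^d → ℝ` is linear (affine). -/
def IsLinearPair {d : ℕ} (f : (Fin d → ℝ) → (Fin d → ℝ) → ℝ) : Prop :=
  ∃ (a b : Fin d → ℝ) (c : ℝ), ∀ x y, f x y = c + (∑ i, a i * x i) + (∑ i, b i * y i)

/-- `G` is a semilinear* graph of complexity `(t,u)`: the vertices can be identified with points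
of `ℝ^d`, and `x,y` are adjacent iff `⋁_{i∈[u]} ⋀_{j∈[t]} f_{i,j}(x,y) < 0`. -/
def IsSemilinearStar {V : Type} (G : SimpleGraph V) (t u : ℕ) : Prop :=
  ∃ d : ℕ, 0 < d ∧
    ∃ v : V → Fin d → ℝ, Function.Injective v ∧
      ∃ f : Fin u → Fin t → (Fin d → ℝ) → (Fin d → ℝ) → ℝ,
        (∀ i j, IsLinearPair (f i j)) ∧
        ∀ x y : V, x ≠ y →
          (G.Adj x y ↔ ∃ i : Fin u, ∀ j : Fin t, f i j (v x) (v y) < 0)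

open Classical in
/-- largest `e` such that some multiple of `2^e` lies in `(a, b]`. -/
noncomputable def dE (a b : ℕ) : ℕ := Nat.findGreatest (fun e => a < 2^e * (b / 2^e)) b

/-- the largest multiple of `2^(dE a b)` that is `≤ b`. -/
noncomputable def dC (a b : ℕ) : ℕ := 2 ^ (dE a b) * (b / 2 ^ (dE a b))

lemma dC_gt {a b : ℕ} (h : a < b) : a < dC a b := by
  classical
  have h0 : (fun e => a < 2^e * (b / 2^e)) 0 := by simpa using h
  exact Nat.findGreatest_spec (P := fun e => a < 2^e * (b / 2^e)) (Nat.zero_le b) h0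

lemma dC_le {a b : ℕ} : dC a b ≤ b := by
  unfold dC
  calc 2 ^ dE a b * (b / 2 ^ dE a b) = (b / 2 ^ dE a b) * 2 ^ dE a b := by ring
  _ ≤ b := Nat.div_mul_le_self b _

lemma dE_not {a b : ℕ} {e' : ℕ} (he : dE a b < e') : ¬ (a < 2^e' * (b / 2^e')) := by
  classical
  by_cases hb : e' ≤ b
  · exact Nat.findGreatest_is_greatest (P := fun e => a < 2^e * (b / 2^e)) he hb
  · push_neg at hb
    have h2 : b < 2 ^ e' := lt_of_lt_of_le hb (Nat.lt_pow_self (n := e') (by norm_num)).le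
    rw [Nat.div_eq_of_lt h2]
    simp

/-- `dC a b` divides by `2^(dE a b)` -/
lemma dC_dvd {a b : ℕ} : 2 ^ (dE a b) ∣ dC a b := Dvd.intro _ rfl

/-- uniqueness: any multiple of `2^(dE a b)` in `(a,b]` equals `dC a b`. -/
lemma dC_unique {a b w : ℕ} (h : a < b) (hdvd : 2 ^ (dE a b) ∣ w) (hw1 : a < w) (hw2 : w ≤ b) :
    w = dC a b := by
  set e := dE a b with he
  -- w ≤ dC a b since dC is the largest multiple ≤ b
  obtain ⟨q, hq⟩ := hdvd
  have hwle : w ≤ dC a b := by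
    have hq' : q ≤ b / 2 ^ e := by
      rw [Nat.le_div_iff_mul_le ((by positivity))]
      calc q * 2 ^ e = w := by rw [hq]; ring
      _ ≤ b := hw2
    calc w = 2 ^ e * q := hq
    _ ≤ 2 ^ e * (b / 2 ^ e) := Nat.mul_le_mul_left _ hq'
    _ = dC a b := rfl
  rcases eq_or_lt_of_le hwle with heq | hlt
  · exact heq
  -- otherwise both w < dC a b are multiples in (a,b]: construct a multiple of 2^(e+1)
  exfalso
  -- w + 2^e ≤ dC a b
  obtain ⟨q', hq'⟩ : 2 ^ e ∣ dC a b := dC_dvd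
  have hql : q < q' := by
    by_contra hcon
    push_neg at hcon
    have : dC a b ≤ w := by
      rw [hq, hq']
      exact Nat.mul_le_mul_left _ hcon
    omega
  have hw2e : w + 2 ^ e ≤ dC a b := by
    rw [hq, hq']
    calc 2^e * q + 2^e = 2^e * (q+1) := by ring
    _ ≤ 2^e * q' := Nat.mul_le_mul_left _ hql
  -- pick w' ∈ {w, w + 2^e} divisible by 2^(e+1)
  have key : ∃ w', 2^(e+1) ∣ w' ∧ a < w' ∧ w' ≤ b := by
    rcases Nat.even_or_odd q with hev | hodd
    · obtain ⟨r, hr⟩ := hev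
      exact ⟨w, ⟨r, by rw [hq, hr]; ring⟩, hw1, hw2⟩
    · obtain ⟨r, hr⟩ := hodd
      exact ⟨w + 2^e, ⟨r+1, by rw [hq, hr]; ring⟩, lt_of_lt_of_le hw1 (Nat.le_add_right _ _),
        le_trans hw2e dC_le⟩
  obtain ⟨w', hdvd', hw1', hw2'⟩ := key
  have : a < 2^(e+1) * (b / 2^(e+1)) := by
    obtain ⟨s, hs⟩ := hdvd'
    have hs' : s ≤ b / 2^(e+1) := by
      rw [Nat.le_div_iff_mul_le ((by positivity))]
      calc s * 2^(e+1) = w' := by rw [hs]; ring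
      _ ≤ b := hw2'
    calc a < w' := hw1'
    _ = 2^(e+1) * s := hs
    _ ≤ 2^(e+1) * (b / 2^(e+1)) := Nat.mul_le_mul_left _ hs'
  exact dE_not (Nat.lt_succ_self e) this

/-- `dC a b` is not divisible by `2^(dE a b + 1)`. -/
lemma dC_not_dvd {a b : ℕ} (h : a < b) : ¬ (2 ^ (dE a b + 1) ∣ dC a b) := by
  intro hdvd
  have : a < 2^(dE a b + 1) * (b / 2^(dE a b + 1)) := by
    obtain ⟨s, hs⟩ := hdvd
    have hs' : s ≤ b / 2^(dE a b + 1) := by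
      rw [Nat.le_div_iff_mul_le ((by positivity))]
      calc s * 2^(dE a b+1) = dC a b := by rw [hs]; ring
      _ ≤ b := dC_le
    calc a < dC a b := dC_gt h
    _ = 2^(dE a b+1) * s := hs
    _ ≤ _ := Nat.mul_le_mul_left _ hs'
  exact dE_not (Nat.lt_succ_self _) this

/-- Main separation lemma: same level, smaller cut ⇒ the first range lies entirely
(weakly) below the second. -/
lemma dyadic_sep {a₁ b₁ a₂ b₂ : ℕ} (h₁ : a₁ < b₁) (h₂ : a₂ < b₂)
    (he : dE a₁ b₁ = dE a₂ b₂) (hc : dC a₁ b₁ < dC a₂ b₂) : b₁ ≤ a₂ := by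
  set e := dE a₁ b₁ with hee
  by_contra hcon
  push_neg at hcon  -- a₂ < b₁
  -- c₁ ≤ a₂ : otherwise c₁ is a multiple of 2^e in (a₂, b₂], so c₁ = c₂, contra
  have hc1a2 : dC a₁ b₁ ≤ a₂ := by
    by_contra hx
    push_neg at hx
    have : dC a₁ b₁ = dC a₂ b₂ := by
      refine dC_unique h₂ ?_ hx (le_trans hc.le dC_le)
      rw [← he]; exact dC_dvd
    omega
  -- b₁ < c₁ + 2^e : otherwise c₁ + 2^e is a multiple of 2^e in (a₁,b₁], ≠ c₁
  have hb1 : b₁ < dC a₁ b₁ + 2 ^ e := by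
    by_contra hx
    push_neg at hx
    have h1 : dC a₁ b₁ + 2^e = dC a₁ b₁ := by
      refine dC_unique h₁ ?_ ?_ hx
      · obtain ⟨q, hq⟩ : (2:ℕ)^e ∣ dC a₁ b₁ := dC_dvd
        exact ⟨q + 1, by rw [hq]; ring⟩
      · exact lt_of_lt_of_le (dC_gt h₁) (Nat.le_add_right _ _)
    have hpos : 0 < 2^e := (by positivity)
    omega
  -- then c₁ + 2^e is a multiple of 2^e in (a₂, b₂]
  have hcc : dC a₂ b₂ ≥ dC a₁ b₁ + 2^e := by
    -- dC a₂ b₂ > dC a₁ b₁, both multiples of 2^e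
    obtain ⟨q₁, hq₁⟩ : (2:ℕ)^e ∣ dC a₁ b₁ := dC_dvd
    obtain ⟨q₂, hq₂⟩ : (2:ℕ)^e ∣ dC a₂ b₂ := by rw [he]; exact dC_dvd
    have : q₁ < q₂ := by
      by_contra hy
      push_neg at hy
      have : dC a₂ b₂ ≤ dC a₁ b₁ := by rw [hq₁, hq₂]; exact Nat.mul_le_mul_left _ hy
      omega
    rw [hq₁, hq₂]
    calc 2^e * q₁ + 2^e = 2^e * (q₁ + 1) := by ring
    _ ≤ 2^e * q₂ := Nat.mul_le_mul_left _ this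
  have ha2lt : a₂ < dC a₁ b₁ + 2 ^ e := hcon.trans hb1
  have hw : dC a₁ b₁ + 2^e = dC a₂ b₂ := by
    refine dC_unique h₂ ?_ ha2lt (le_trans hcc dC_le)
    rw [← he]
    obtain ⟨q, hq⟩ : (2:ℕ)^e ∣ dC a₁ b₁ := dC_dvd
    exact ⟨q + 1, by rw [hq]; ring⟩
  -- but then c₂ = c₁ + 2^e is divisible by 2^(e+1) or c₁ is: parity contradiction
  obtain ⟨q₁, hq₁⟩ : (2:ℕ)^e ∣ dC a₁ b₁ := dC_dvd
  rcases Nat.even_or_odd q₁ with hev | hodd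
  · obtain ⟨r, hr⟩ := hev
    exact dC_not_dvd h₁ ⟨r, by rw [hq₁, hr]; ring⟩
  · obtain ⟨r, hr⟩ := hodd
    have : 2^(e+1) ∣ dC a₂ b₂ := ⟨r + 1, by rw [← hw, hq₁, hr]; ring⟩
    rw [he] at this
    exact dC_not_dvd h₂ this

lemma dE_le_log {a b : ℕ} (h : a < b) : dE a b ≤ Nat.log 2 b := by
  have h2 : 2 ^ dE a b ≤ b := by
    have := dC_gt h
    have hle : dC a b ≤ b := dC_le
    unfold dC at this hle
    by_contra hx
    push_neg at hx
    rw [Nat.div_eq_of_lt hx] at this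
    simpa using this
  exact (Nat.le_log_iff_pow_le (by norm_num) (by omega)).mpr h2

open Classical

/-- Mirsky-type bound: if every `r`-chain in `S` has at most `A` elements and every
`r`-antichain has at most `B` elements, then `|S| ≤ A*B`. -/
lemma mirsky {V : Type} (S : Finset V) (r : V → V → Prop)
    (htrans : ∀ x ∈ S, ∀ y ∈ S, ∀ z ∈ S, r x y → r y z → r x z)
    (hirr : ∀ x ∈ S, ¬ r x x)
    (A B : ℕ)
    (hchain : ∀ T ⊆ S, (∀ x ∈ T, ∀ y ∈ T, x ≠ y → r x y ∨ r y x) → T.card ≤ A)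
    (hanti : ∀ T ⊆ S, (∀ x ∈ T, ∀ y ∈ T, x ≠ y → ¬ r x y ∧ ¬ r y x) → T.card ≤ B) :
    S.card ≤ A * B := by
  classical
  -- height function
  set okT : V → Finset V → Prop := fun x T =>
    x ∈ T ∧ (∀ y ∈ T, ∀ z ∈ T, y ≠ z → r y z ∨ r z y) ∧ (∀ y ∈ T, y = x ∨ r y x) with hokT
  set h : V → ℕ := fun x => ((S.powerset.filter (okT x)).sup Finset.card) with hh
  have hsingle : ∀ x ∈ S, okT x {x} := by
    intro x hx
    refine ⟨Finset.mem_singleton_self x, ?_, ?_⟩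
    · intro y hy z hz hyz
      rw [Finset.mem_singleton] at hy hz; exact absurd (hy.trans hz.symm) hyz
    · intro y hy; rw [Finset.mem_singleton] at hy; exact Or.inl hy
  have h_ge1 : ∀ x ∈ S, 1 ≤ h x := by
    intro x hx
    have : ({x} : Finset V) ∈ S.powerset.filter (okT x) := by
      rw [Finset.mem_filter, Finset.mem_powerset]
      exact ⟨Finset.singleton_subset_iff.mpr hx, hsingle x hx⟩
    calc 1 = ({x} : Finset V).card := (Finset.card_singleton x).symm
    _ ≤ _ := Finset.le_sup this
  have h_leA : ∀ x ∈ S, h x ≤ A := by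
    intro x hx
    apply Finset.sup_le
    intro T hT
    rw [Finset.mem_filter, Finset.mem_powerset] at hT
    exact hchain T hT.1 hT.2.2.1
  have h_mono : ∀ x ∈ S, ∀ y ∈ S, r x y → h x < h y := by
    intro x hx y hy hr
    -- take a chain attaining h x
    have hne : (S.powerset.filter (okT x)).Nonempty := by
      refine ⟨{x}, ?_⟩
      rw [Finset.mem_filter, Finset.mem_powerset]
      exact ⟨Finset.singleton_subset_iff.mpr hx, hsingle x hx⟩
    obtain ⟨T, hT, hTsup⟩ := Finset.exists_mem_eq_sup _ hne Finset.card
    rw [Finset.mem_filter, Finset.mem_powerset] at hT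
    obtain ⟨hTS, hxT, hTchain, hTend⟩ := hT
    have hyT : y ∉ T := by
      intro hyT
      rcases hTend y hyT with rfl | hryx
      · exact hirr y hy hr
      · exact hirr x hx (htrans x hx y hy x hx hr hryx)
    have hup : ∀ z ∈ T, r z y := by
      intro z hz
      rcases hTend z hz with hzx | hrz
      · rw [hzx]; exact hr
      · exact htrans z (hTS hz) x hx y hy hrz hr
    have hins : okT y (insert y T) := by
      refine ⟨Finset.mem_insert_self y T, ?_, ?_⟩
      · intro z hz w hw hzw
        rw [Finset.mem_insert] at hz hw
        rcases hz with hz | hz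
        · rcases hw with hw | hw
          · exact absurd (hz.trans hw.symm) hzw
          · exact Or.inr (by rw [hz]; exact hup w hw)
        · rcases hw with hw | hw
          · exact Or.inl (by rw [hw]; exact hup z hz)
          · exact hTchain z hz w hw hzw
      · intro z hz
        rw [Finset.mem_insert] at hz
        rcases hz with hz | hz
        · exact Or.inl hz
        · exact Or.inr (hup z hz)
    have : (insert y T) ∈ S.powerset.filter (okT y) := by
      rw [Finset.mem_filter, Finset.mem_powerset]
      exact ⟨Finset.insert_subset hy hTS, hins⟩
    calc h x = T.card := hTsup
    _ < (insert y T).card := by rw [Finset.card_insert_of_notMem hyT]; omega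
    _ ≤ h y := Finset.le_sup this
  -- now count fiberwise by h
  have hmap : ∀ x ∈ S, h x ∈ Finset.Icc 1 A := by
    intro x hx; rw [Finset.mem_Icc]; exact ⟨h_ge1 x hx, h_leA x hx⟩
  rw [Finset.card_eq_sum_card_fiberwise hmap]
  have hfib : ∀ v ∈ Finset.Icc 1 A, (S.filter (fun x => h x = v)).card ≤ B := by
    intro v _
    apply hanti _ (Finset.filter_subset _ _)
    intro x hx y hy hxy
    rw [Finset.mem_filter] at hx hy
    constructor
    · intro hr; have := h_mono x hx.1 y hy.1 hr; omega
    · intro hr; have := h_mono y hy.1 x hx.1 hr; omega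
  calc ∑ v ∈ Finset.Icc 1 A, (S.filter (fun x => h x = v)).card
      ≤ (Finset.Icc 1 A).card * B := by
        rw [← smul_eq_mul]
        exact Finset.sum_le_card_nsmul _ _ B hfib
  _ ≤ A * B := by
        have hcard : (Finset.Icc 1 A).card = A := by rw [Nat.card_Icc]; omega
        rw [hcard]

/-- Cluster counting: if `T` is partitioned by a key function into classes of size `≤ a`,
and any subset with pairwise-distinct keys has size `≤ b`, then `|T| ≤ a*b`. -/
lemma clusters {V : Type} [LinearOrder V] {κ : Type} [DecidableEq κ]
    (T : Finset V) (k : V → κ) (a b : ℕ)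
    (hfib : ∀ W ⊆ T, (∀ x ∈ W, ∀ y ∈ W, k x = k y) → W.card ≤ a)
    (hdist : ∀ W ⊆ T, (∀ x ∈ W, ∀ y ∈ W, x ≠ y → k x ≠ k y) → W.card ≤ b) :
    T.card ≤ a * b := by
  classical
  rcases T.eq_empty_or_nonempty with rfl | hTne
  · simp
  set rep : V → V := fun x => ((T.filter (fun y => k y = k x)).min).untopD x with hrep
  have hrepmem : ∀ x ∈ T, rep x ∈ T ∧ k (rep x) = k x := by
    intro x hx
    have hxmem : x ∈ T.filter (fun y => k y = k x) := by
      rw [Finset.mem_filter]; exact ⟨hx, rfl⟩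
    obtain ⟨m, hm⟩ := Finset.min_of_mem hxmem
    have hmmem := Finset.mem_of_min hm
    rw [Finset.mem_filter] at hmmem
    have : rep x = m := by simp only [hrep]; rw [hm]; rfl
    rw [this]
    exact hmmem
  have hrepeq : ∀ x ∈ T, ∀ y ∈ T, k x = k y → rep x = rep y := by
    intro x hx y hy hk
    have hset : T.filter (fun z => k z = k x) = T.filter (fun z => k z = k y) := by
      apply Finset.filter_congr
      intro z _
      rw [hk]
    have hY : y ∈ T.filter (fun z => k z = k y) := by
      rw [Finset.mem_filter]; exact ⟨hy, rfl⟩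
    obtain ⟨m, hm⟩ := Finset.min_of_mem hY
    simp only [hrep]
    rw [hset, hm]
    rfl
  have hmap : ∀ x ∈ T, rep x ∈ T.image rep := fun x hx => Finset.mem_image_of_mem rep hx
  rw [Finset.card_eq_sum_card_fiberwise hmap]
  have himg : (T.image rep).card ≤ b := by
    apply hdist _ ?_ ?_
    · intro w hw
      rw [Finset.mem_image] at hw
      obtain ⟨x, hx, rfl⟩ := hw
      exact (hrepmem x hx).1
    · intro w1 hw1 w2 hw2 hne hk
      rw [Finset.mem_image] at hw1 hw2
      obtain ⟨x1, hx1, rfl⟩ := hw1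
      obtain ⟨x2, hx2, rfl⟩ := hw2
      have k1 : k x1 = k x2 := by
        rw [← (hrepmem x1 hx1).2, ← (hrepmem x2 hx2).2, hk]
      exact hne (hrepeq x1 hx1 x2 hx2 k1)
  have hfib' : ∀ w ∈ T.image rep, (T.filter (fun x => rep x = w)).card ≤ a := by
    intro w hw
    rw [Finset.mem_image] at hw
    obtain ⟨x0, hx0, rfl⟩ := hw
    apply hfib _ (Finset.filter_subset _ _)
    intro x hx y hy
    rw [Finset.mem_filter] at hx hy
    have e1 : k x = k (rep x0) := by
      rw [← hx.2]; exact ((hrepmem x hx.1).2).symm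
    have e2 : k y = k (rep x0) := by
      rw [← hy.2]; exact ((hrepmem y hy.1).2).symm
    rw [e1, e2]
  calc ∑ w ∈ T.image rep, (T.filter (fun x => rep x = w)).card
      ≤ (T.image rep).card * a := by
        rw [← smul_eq_mul]
        exact Finset.sum_le_card_nsmul _ _ a hfib'
  _ ≤ b * a := Nat.mul_le_mul_right a himg
  _ = a * b := Nat.mul_comm b a

/-- The core counting lemma: a graph on `S` whose adjacency is given by
`Rel x y = Dom x y ∨ Dom y x` with `Dom x y = ∀ j < t, lo x j < hi y j`,
with cliques of size `≤ a` and independent sets of size `≤ b`, is small. -/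
lemma symdom {V : Type} [LinearOrder V] (lo hi : V → ℕ → ℝ) (t : ℕ) (S : Finset V)
    (M : ℕ) (hM : S.card ≤ M) (a b : ℕ)
    (hCl : ∀ T ⊆ S, (∀ x ∈ T, ∀ y ∈ T, x ≠ y →
      ((∀ j < t, lo x j < hi y j) ∨ (∀ j < t, lo y j < hi x j))) → T.card ≤ a)
    (hIS : ∀ T ⊆ S, (∀ x ∈ T, ∀ y ∈ T, x ≠ y →
      ¬((∀ j < t, lo x j < hi y j) ∨ (∀ j < t, lo y j < hi x j))) → T.card ≤ b) :
    S.card ≤ (Nat.log 2 (2*M) + 2)^t * (a * b * (a + b)) := by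
  classical
  set L := Nat.log 2 (2*M) with hL
  set Dom : V → V → Prop := fun x y => ∀ j < t, lo x j < hi y j with hDom
  set X : ℕ → Finset ℝ := fun j => S.image (fun x => lo x j) ∪ S.image (fun x => hi x j)
    with hX
  set rk : ℕ → ℝ → ℕ := fun j v => ((X j).filter (fun w => w < v)).card with hrk
  have rk_mono : ∀ j (v w : ℝ), v ≤ w → rk j v ≤ rk j w := by
    intro j v w hvw
    apply Finset.card_le_card
    intro u hu
    rw [Finset.mem_filter] at hu ⊢
    exact ⟨hu.1, lt_of_lt_of_le hu.2 hvw⟩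
  have rk_strict : ∀ j (v w : ℝ), v ∈ X j → v < w → rk j v < rk j w := by
    intro j v w hv hvw
    have hsub : insert v ((X j).filter (fun u => u < v)) ⊆ (X j).filter (fun u => u < w) := by
      intro u hu
      rw [Finset.mem_insert] at hu
      rw [Finset.mem_filter]
      rcases hu with rfl | hu
      · exact ⟨hv, hvw⟩
      · rw [Finset.mem_filter] at hu
        exact ⟨hu.1, hu.2.trans hvw⟩
    have hnotmem : v ∉ (X j).filter (fun u => u < v) := by
      rw [Finset.mem_filter]
      rintro ⟨-, h⟩
      exact lt_irrefl v h
    calc rk j v < rk j v + 1 := Nat.lt_succ_self _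
    _ = (insert v ((X j).filter (fun u => u < v))).card := by
        rw [Finset.card_insert_of_notMem hnotmem]
    _ ≤ _ := Finset.card_le_card hsub
  have lo_memX : ∀ x ∈ S, ∀ j, lo x j ∈ X j := by
    intro x hx j
    exact Finset.mem_union_left _ (Finset.mem_image_of_mem _ hx)
  have hi_memX : ∀ x ∈ S, ∀ j, hi x j ∈ X j := by
    intro x hx j
    exact Finset.mem_union_right _ (Finset.mem_image_of_mem _ hx)
  set aj : V → ℕ → ℕ := fun x j => rk j (lo x j) with haj
  set bj : V → ℕ → ℕ := fun x j => rk j (hi x j) with hbj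
  set cj : V → ℕ → ℕ := fun x j => dC (aj x j) (bj x j) with hcj
  -- basic comparison transfers
  have rk_to_val : ∀ x ∈ S, ∀ (y : V), ∀ j, aj x j < bj y j → lo x j < hi y j := by
    intro x hx y j h
    by_contra hc
    push_neg at hc
    have h2 := rk_mono j _ _ hc
    simp only [haj, hbj] at h
    omega
  have val_to_rk : ∀ x ∈ S, ∀ y, ∀ j, lo x j < hi y j → aj x j < bj y j := by
    intro x hx y j h
    exact rk_strict j _ _ (lo_memX x hx j) h
  have rk_to_val' : ∀ (x : V), ∀ y ∈ S, ∀ j, bj x j ≤ aj y j → hi x j ≤ lo y j := by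
    intro x y hy j h
    by_contra hc
    push_neg at hc
    have h2 := rk_strict j _ _ (lo_memX y hy j) hc
    simp only [haj, hbj] at h
    omega
  have bj_le : ∀ x ∈ S, ∀ j, bj x j ≤ 2*M := by
    intro x hx j
    have h1 : bj x j ≤ (X j).card := Finset.card_le_card (Finset.filter_subset _ _)
    have h2 : (X j).card ≤ S.card + S.card :=
      le_trans (Finset.card_union_le _ _) (by
        exact Nat.add_le_add (Finset.card_image_le) (Finset.card_image_le))
    omega
  set nd : V → ℕ → Prop := fun x j => lo x j < hi x j with hnd
  set ej : V → ℕ → ℕ := fun x j => if nd x j then dE (aj x j) (bj x j) + 1 else 0 with hej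
  have ej_lt : ∀ x ∈ S, ∀ j, ej x j < L + 2 := by
    intro x hx j
    simp only [hej]
    split
    · next hx' =>
      have h1 : aj x j < bj x j := val_to_rk x hx x j hx'
      have h2 := dE_le_log h1
      have h3 : Nat.log 2 (bj x j) ≤ L := by
        rw [hL]
        rcases Nat.eq_zero_or_pos (bj x j) with h | h
        · simp [h]
        · exact Nat.log_mono_right (by have := bj_le x hx j; omega)
      omega
    · omega
  set key : V → (Fin t → Fin (L+2)) := fun x j => ⟨min (ej x j.1) (L+1), by omega⟩ with hkey
  have key_eq_iff : ∀ x ∈ S, ∀ y ∈ S, key x = key y → ∀ j < t, ej x j = ej y j := by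
    intro x hx y hy hk j hj
    have := congrFun hk ⟨j, hj⟩
    rw [Fin.ext_iff] at this
    simp only [hkey] at this
    have ex := ej_lt x hx j
    have ey := ej_lt y hy j
    omega
  have hmap : ∀ x ∈ S, key x ∈ S.image key := fun x hx => Finset.mem_image_of_mem key hx
  rw [Finset.card_eq_sum_card_fiberwise hmap]
  have himg : (S.image key).card ≤ (L+2)^t := by
    calc (S.image key).card ≤ Fintype.card (Fin t → Fin (L+2)) := Finset.card_le_univ _
    _ = (L+2)^t := by rw [Fintype.card_fun]; simp
  have hfiber : ∀ κ ∈ S.image key, (S.filter (fun x => key x = κ)).card ≤ a * b * (a+b) := by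
    intro κ hκ
    set F := S.filter (fun x => key x = κ) with hF
    rcases F.eq_empty_or_nonempty with hFe | ⟨x₀, hx₀⟩
    · rw [hFe]; simp
    have hFS : F ⊆ S := Finset.filter_subset _ _
    have hFmem : ∀ x ∈ F, x ∈ S ∧ key x = κ := by
      intro x hx; rw [hF, Finset.mem_filter] at hx; exact hx
    have hsamekey : ∀ x ∈ F, ∀ y ∈ F, ∀ j < t, ej x j = ej y j := by
      intro x hx y hy j hj
      exact key_eq_iff x (hFmem x hx).1 y (hFmem y hy).1
        (by rw [(hFmem x hx).2, (hFmem y hy).2]) j hj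
    have hnd_iff : ∀ x ∈ F, ∀ y ∈ F, ∀ j < t, nd x j → nd y j := by
      intro x hx y hy j hj hndx
      have := hsamekey x hx y hy j hj
      simp only [hej, if_pos hndx] at this
      by_contra hc
      rw [if_neg hc] at this
      omega
    have hdE_eq : ∀ x ∈ F, ∀ y ∈ F, ∀ j < t, nd x j → nd y j →
        dE (aj x j) (bj x j) = dE (aj y j) (bj y j) := by
      intro x hx y hy j hj h1 h2
      have := hsamekey x hx y hy j hj
      simp only [hej, if_pos h1, if_pos h2] at this
      omega
    -- F1 : same cut ⇒ condition true
    have F1 : ∀ x ∈ F, ∀ y ∈ F, ∀ j < t, nd x j → nd y j →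
        cj x j = cj y j → lo x j < hi y j := by
      intro x hx y hy j hj h1 h2 hcc
      have hax : aj x j < bj x j := val_to_rk x (hFS hx) x j h1
      have hay : aj y j < bj y j := val_to_rk y (hFS hy) y j h2
      have g1 : aj x j < cj x j := dC_gt hax
      have g2 : cj y j ≤ bj y j := dC_le
      exact rk_to_val x (hFS hx) y j (by omega)
    -- F2 : smaller cut ⇒ separation
    have F2 : ∀ x ∈ F, ∀ y ∈ F, ∀ j < t, nd x j → nd y j →
        cj x j < cj y j → hi x j ≤ lo y j := by
      intro x hx y hy j hj h1 h2 hcc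
      have hax : aj x j < bj x j := val_to_rk x (hFS hx) x j h1
      have hay : aj y j < bj y j := val_to_rk y (hFS hy) y j h2
      have := dyadic_sep hax hay (hdE_eq x hx y hy j hj h1 h2) hcc
      exact rk_to_val' x y (hFS hy) j this
    by_cases hdeg : ∃ j, j < t ∧ ¬ nd x₀ j
    · -- CASE A : some degenerate coordinate
      obtain ⟨j₀, hj₀, hdj₀⟩ := hdeg
      set r : V → V → Prop := fun x y => ∀ j < t, ¬ nd x₀ j → lo x j < hi y j with hr
      have hdegall : ∀ x ∈ F, ∀ j < t, ¬ nd x₀ j → hi x j ≤ lo x j := by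
        intro x hx j hj hd
        by_contra hc
        push_neg at hc
        exact hd (hnd_iff x hx x₀ hx₀ j hj hc)
      have rtrans : ∀ x ∈ F, ∀ y ∈ F, ∀ z ∈ F, r x y → r y z → r x z := by
        intro x hx y hy z hz h1 h2 j hj hd
        calc lo x j < hi y j := h1 j hj hd
        _ ≤ lo y j := hdegall y hy j hj hd
        _ < hi z j := h2 j hj hd
      have rirr : ∀ x ∈ F, ¬ r x x := by
        intro x hx hxx
        have := hxx j₀ hj₀ hdj₀
        have := hdegall x hx j₀ hj₀ hdj₀
        linarith
      refine le_trans (mirsky F r rtrans rirr (a*b) b ?_ ?_) (by ring_nf; nlinarith)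
      · -- chains of r : bounded via inner Mirsky
        intro T hT hTch
        set q : V → V → Prop := fun x y => r x y ∧ ∀ j < t, nd x₀ j → cj x j ≤ cj y j with hq
        have hTF : T ⊆ F := hT
        apply mirsky T q
        · intro x hx y hy z hz h1 h2
          refine ⟨rtrans x (hTF hx) y (hTF hy) z (hTF hz) h1.1 h2.1, ?_⟩
          intro j hj hn
          exact le_trans (h1.2 j hj hn) (h2.2 j hj hn)
        · intro x hx hxx
          exact rirr x (hTF hx) hxx.1
        · -- chains of q are cliques
          intro T' hT' hT'ch
          apply hCl T' (le_trans (le_trans hT' hT) hFS)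
          intro x hx y hy hxy
          have hxF := hTF (hT' hx)
          have hyF := hTF (hT' hy)
          have hdom : ∀ u, u ∈ F → ∀ w, w ∈ F → q u w → ∀ j < t, lo u j < hi w j := by
            intro u hu w hw hq' j hj
            by_cases hn : nd x₀ j
            · have hnu : nd u j := hnd_iff x₀ hx₀ u hu j hj hn
              have hnw : nd w j := hnd_iff x₀ hx₀ w hw j hj hn
              rcases lt_or_eq_of_le (hq'.2 j hj hn) with hlt | heq
              · have := F2 u hu w hw j hj hnu hnw hlt
                have h1 : lo u j < hi u j := hnu
                have h2 : lo w j < hi w j := hnw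
                linarith
              · exact F1 u hu w hw j hj hnu hnw heq
            · exact hq'.1 j hj hn
          rcases hT'ch x hx y hy hxy with h | h
          · exact Or.inl (hdom x hxF y hyF h)
          · exact Or.inr (hdom y hyF x hxF h)
        · -- antichains of q are independent
          intro T' hT' hT'anti
          apply hIS T' (le_trans (le_trans hT' hT) hFS)
          intro x hx y hy hxy
          have hxF := hTF (hT' hx)
          have hyF := hTF (hT' hy)
          have hnab := hT'anti x hx y hy hxy
          -- x,y are r-comparable in T
          have hkill : ∀ u, u ∈ F → ∀ w, w ∈ F → r u w → ¬ q u w →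
              ¬((∀ j < t, lo u j < hi w j) ∨ (∀ j < t, lo w j < hi u j)) := by
            intro u hu w hw hruw hnq
            have hex : ∃ j, j < t ∧ nd x₀ j ∧ cj w j < cj u j := by
              by_contra hc
              push_neg at hc
              exact hnq ⟨hruw, fun j hj hn => by
                have := hc j hj hn
                omega⟩
            obtain ⟨j, hj, hn, hlt⟩ := hex
            have hnu : nd u j := hnd_iff x₀ hx₀ u hu j hj hn
            have hnw : nd w j := hnd_iff x₀ hx₀ w hw j hj hn
            have hsep : hi w j ≤ lo u j := F2 w hw u hu j hj hnw hnu hlt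
            rintro (hD | hD)
            · have := hD j hj
              linarith
            · -- Dom w u fails at j₀
              have h1 := hruw j₀ hj₀ hdj₀
              have h2 := hdegall u hu j₀ hj₀ hdj₀
              have h3 := hdegall w hw j₀ hj₀ hdj₀
              have := hD j₀ hj₀
              linarith
          rcases hTch x (hT' hx) y (hT' hy) hxy with hrxy | hryx
          · exact hkill x hxF y hyF hrxy hnab.1
          · intro hcon
            apply hkill y hyF x hxF hryx hnab.2
            tauto
      · -- antichains of r are independent
        intro T hT hTanti
        apply hIS T (le_trans hT hFS)
        intro x hx y hy hxy
        have h1 := hTanti x hx y hy hxy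
        rintro (hD | hD)
        · obtain ⟨j, hj, hn, hv⟩ : ∃ j, j < t ∧ ¬ nd x₀ j ∧ ¬(lo x j < hi y j) := by
            by_contra hc
            push_neg at hc
            exact h1.1 (fun j hj hn => hc j hj hn)
          exact hv (hD j hj)
        · obtain ⟨j, hj, hn, hv⟩ : ∃ j, j < t ∧ ¬ nd x₀ j ∧ ¬(lo y j < hi x j) := by
            by_contra hc
            push_neg at hc
            exact h1.2 (fun j hj hn => hc j hj hn)
          exact hv (hD j hj)
    · -- CASE B : all coordinates nondegenerate
      push_neg at hdeg
      have hndall : ∀ x ∈ F, ∀ j < t, nd x j := by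
        intro x hx j hj
        exact hnd_iff x₀ hx₀ x hx j hj (hdeg j hj)
      set q : V → V → Prop := fun x y =>
        (∀ j < t, cj x j ≤ cj y j) ∧ (∃ j, j < t ∧ cj x j < cj y j) with hq
      have qtrans : ∀ x ∈ F, ∀ y ∈ F, ∀ z ∈ F, q x y → q y z → q x z := by
        intro x _ y _ z _ h1 h2
        refine ⟨fun j hj => le_trans (h1.1 j hj) (h2.1 j hj), ?_⟩
        obtain ⟨j, hj, hlt⟩ := h1.2
        exact ⟨j, hj, lt_of_lt_of_le hlt (h2.1 j hj)⟩
      have qirr : ∀ x ∈ F, ¬ q x x := by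
        intro x _ hxx
        obtain ⟨j, hj, hlt⟩ := hxx.2
        omega
      refine le_trans (mirsky F q qtrans qirr a (a*b) ?_ ?_) (by ring_nf; nlinarith)
      · -- chains of q are cliques
        intro T hT hTch
        apply hCl T (le_trans hT hFS)
        intro x hx y hy hxy
        have hdom : ∀ u, u ∈ F → ∀ w, w ∈ F → q u w → ∀ j < t, lo u j < hi w j := by
          intro u hu w hw hq' j hj
          have hnu : nd u j := hndall u hu j hj
          have hnw : nd w j := hndall w hw j hj
          rcases lt_or_eq_of_le (hq'.1 j hj) with hlt | heq
          · have := F2 u hu w hw j hj hnu hnw hlt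
            have h1 : lo u j < hi u j := hnu
            have h2 : lo w j < hi w j := hnw
            linarith
          · exact F1 u hu w hw j hj hnu hnw heq
        rcases hTch x hx y hy hxy with h | h
        · exact Or.inl (hdom x (hT hx) y (hT hy) h)
        · exact Or.inr (hdom y (hT hy) x (hT hx) h)
      · -- antichains of q : cluster argument
        intro T hT hTanti
        have := clusters T (fun x => (fun j : Fin t => cj x j.1)) a b ?_ ?_
        · linarith [this]
        · -- same c-vector : cliques
          intro W hW hWk
          apply hCl W (le_trans (le_trans hW hT) hFS)
          intro x hx y hy hxy
          left
          intro j hj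
          have := congrFun (hWk x hx y hy) ⟨j, hj⟩
          simp only at this
          exact F1 x (hT (hW hx)) y (hT (hW hy)) j hj
            (hndall x (hT (hW hx)) j hj) (hndall y (hT (hW hy)) j hj) this
        · -- pairwise distinct c-vectors : independent
          intro W hW hWd
          apply hIS W (le_trans (le_trans hW hT) hFS)
          intro x hx y hy hxy
          have hxF := hT (hW hx)
          have hyF := hT (hW hy)
          have hk := hWd x hx y hy hxy
          have hdiff : ∃ j, j < t ∧ cj x j ≠ cj y j := by
            by_contra hc
            push_neg at hc
            apply hk
            funext j
            exact hc j.1 j.2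
          have hanti := hTanti x (hW hx) y (hW hy) hxy
          have hgt : ∃ j, j < t ∧ cj y j < cj x j := by
            by_contra hc
            push_neg at hc
            obtain ⟨j, hj, hne⟩ := hdiff
            exact hanti.1 ⟨fun j' hj' => hc j' hj', ⟨j, hj, by have := hc j hj; omega⟩⟩
          have hlt : ∃ j, j < t ∧ cj x j < cj y j := by
            by_contra hc
            push_neg at hc
            obtain ⟨j, hj, hne⟩ := hdiff
            exact hanti.2 ⟨fun j' hj' => hc j' hj', ⟨j, hj, by have := hc j hj; omega⟩⟩
          obtain ⟨j1, hj1, hv1⟩ := hgt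
          obtain ⟨j2, hj2, hv2⟩ := hlt
          have s1 : hi y j1 ≤ lo x j1 := F2 y hyF x hxF j1 hj1
            (hndall y hyF j1 hj1) (hndall x hxF j1 hj1) hv1
          have s2 : hi x j2 ≤ lo y j2 := F2 x hxF y hyF j2 hj2
            (hndall x hxF j2 hj2) (hndall y hyF j2 hj2) hv2
          rintro (hD | hD)
          · have := hD j1 hj1
            linarith
          · have := hD j2 hj2
            linarith
  calc ∑ κ ∈ S.image key, (S.filter (fun x => key x = κ)).card
      ≤ (S.image key).card * (a*b*(a+b)) := by
        rw [← smul_eq_mul]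
        exact Finset.sum_le_card_nsmul _ _ _ hfiber
  _ ≤ (L+2)^t * (a*b*(a+b)) := Nat.mul_le_mul_right _ himg

/-- Recursive bound used when peeling the `u` clauses one at a time. -/
def PhiF (c n : ℕ) : ℕ → ℕ
  | 0 => n
  | s+1 => c * (n * PhiF c n s * (n + PhiF c n s))

lemma peel {V : Type} [Fintype V] [LinearOrder V] (G : SimpleGraph V) (u t n : ℕ)
    (lo hi : Fin u → V → ℕ → ℝ)
    (hA : ∀ T : Finset V, (∀ x ∈ T, ∀ y ∈ T, x ≠ y → G.Adj x y) → T.card ≤ n)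
    (hB : ∀ T : Finset V, (∀ x ∈ T, ∀ y ∈ T, x ≠ y → ¬ G.Adj x y) → T.card ≤ n) :
    ∀ (s : ℕ) (I : Finset (Fin u)) (S : Finset V), I.card = s →
    (∀ x ∈ S, ∀ y ∈ S, x ≠ y → (G.Adj x y ↔ ∃ i ∈ I,
       (∀ j < t, lo i x j < hi i y j) ∨ (∀ j < t, lo i y j < hi i x j))) →
    S.card ≤ PhiF ((Nat.log 2 (2 * Fintype.card V) + 2)^t) n s := by
  intro s
  induction s with
  | zero =>
    intro I S hI hrep
    rw [Finset.card_eq_zero] at hI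
    subst hI
    apply hB
    intro x hx y hy hxy hadj
    obtain ⟨i, hi, -⟩ := (hrep x hx y hy hxy).mp hadj
    exact absurd hi (Finset.notMem_empty i)
  | succ s ih =>
    intro I S hI hrep
    have hne : I.Nonempty := Finset.card_pos.mp (by omega)
    obtain ⟨i₀, hi₀⟩ := hne
    have hMle : S.card ≤ Fintype.card V := by
      calc S.card ≤ (Finset.univ : Finset V).card := Finset.card_le_univ S
      _ = Fintype.card V := Finset.card_univ
    exact symdom (lo i₀) (hi i₀) t S (Fintype.card V) hMle n (PhiF _ n s)
      (by
        intro T hT hpair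
        apply hA
        intro x hx y hy hxy
        exact (hrep x (hT hx) y (hT hy) hxy).mpr ⟨i₀, hi₀, hpair x hx y hy hxy⟩)
      (by
        intro T hT hpair
        apply ih (I.erase i₀) T (by rw [Finset.card_erase_of_mem hi₀, hI]; omega)
        intro x hx y hy hxy
        constructor
        · intro hadj
          obtain ⟨i, hi, hd⟩ := (hrep x (hT hx) y (hT hy) hxy).mp hadj
          refine ⟨i, Finset.mem_erase.mpr ⟨?_, hi⟩, hd⟩
          rintro rfl
          exact hpair x hx y hy hxy hd
        · rintro ⟨i, hi, hd⟩
          exact (hrep x (hT hx) y (hT hy) hxy).mpr ⟨i, Finset.mem_of_mem_erase hi, hd⟩)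

lemma phi_ge {c n : ℕ} (hc : 1 ≤ c) (hn : 1 ≤ n) : ∀ s, n ≤ PhiF c n s := by
  intro s
  induction s with
  | zero => exact le_refl n
  | succ s ih =>
    have h1 : 1 ≤ PhiF c n s := le_trans hn ih
    calc n = 1 * (n * 1 * (0 + 1)) := by ring
    _ ≤ c * (n * PhiF c n s * (n + PhiF c n s)) := by
        apply Nat.mul_le_mul hc
        apply Nat.mul_le_mul
        · exact Nat.mul_le_mul_left n h1
        · omega
    _ = PhiF c n (s+1) := rfl

lemma phi_bound {c n : ℕ} (hc : 1 ≤ c) (hn : 1 ≤ n) :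
    ∀ s, PhiF c n s ≤ (2*c*n)^(2^(s+1) - 1) := by
  intro s
  induction s with
  | zero =>
    simp only [PhiF]
    calc n ≤ 2*c*n := by nlinarith
    _ ≤ (2*c*n)^(2^1 - 1) := by norm_num
  | succ s ih =>
    have hphin := phi_ge hc hn s
    have h2 : PhiF c n (s+1) ≤ 2*c*n * (PhiF c n s)^2 := by
      calc PhiF c n (s+1) = c * (n * PhiF c n s * (n + PhiF c n s)) := rfl
      _ ≤ c * (n * PhiF c n s * (PhiF c n s + PhiF c n s)) := by
          apply Nat.mul_le_mul_left
          apply Nat.mul_le_mul_left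
          omega
      _ = 2*c*n * (PhiF c n s)^2 := by ring
    have hY : 1 ≤ 2*c*n := by nlinarith
    calc PhiF c n (s+1) ≤ 2*c*n * (PhiF c n s)^2 := h2
    _ ≤ 2*c*n * ((2*c*n)^(2^(s+1) - 1))^2 := by
        apply Nat.mul_le_mul_left
        exact Nat.pow_le_pow_left ih 2
    _ = (2*c*n)^(2*(2^(s+1) - 1) + 1) := by ring
    _ = (2*c*n)^(2^(s+2) - 1) := by
        congr 1
        have h1 : 1 ≤ 2^(s+1) := Nat.one_le_two_pow
        have h2 : 2^(s+2) = 2*2^(s+1) := by ring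
        omega

set_option maxHeartbeats 1000000 in
/-- For all positive integers `t, u` there are constants `α = α(t,u) > 0` and `β = β(u) > 0`
(`β` depending only on `u`) such that every semilinear* graph of complexity `(t,u)` with more
than `α·n^β` vertices contains a clique or independent set of size `n`. -/
theorem stmt4 (u : ℕ) (hu : 0 < u) :
    ∃ β : ℝ, 0 < β ∧ ∀ t : ℕ, 0 < t →
      ∃ α : ℝ, 0 < α ∧ ∀ n : ℕ, 0 < n →
        ∀ (V : Type) [Fintype V] (G : SimpleGraph V), IsSemilinearStar G t u →
          α * (n : ℝ) ^ β < (Fintype.card V : ℝ) →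
          (∃ S : Finset V, G.IsNClique n S) ∨ (∃ S : Finset V, Gᶜ.IsNClique n S) := by
  classical
  set E : ℕ := 2^(u+1) with hE
  refine ⟨((2*E : ℕ) : ℝ), by positivity, ?_⟩
  intro t ht
  set D : ℕ := t * E with hD
  have hD1 : 1 ≤ D := by
    have : 1 ≤ E := Nat.one_le_two_pow
    calc 1 = 1 * 1 := rfl
    _ ≤ t * E := Nat.mul_le_mul ht this
  set A : ℝ := 2^E * 5^D * (2*(D:ℝ))^D with hA
  have hApos : 0 < A := by
    rw [hA]
    have : (0:ℝ) < (D:ℝ) := by exact_mod_cast hD1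
    positivity
  refine ⟨2*A^2 + 1, by positivity, ?_⟩
  intro n hn V _ G hsemi hcard
  by_contra hcon
  push_neg at hcon
  obtain ⟨hnc, hni⟩ := hcon
  letI : LinearOrder V := LinearOrder.lift' (Fintype.equivFin V) (Equiv.injective _)
  obtain ⟨d, hd, v, hv, f, hlin, hadj⟩ := hsemi
  choose Af Bf Cf hABC using hlin
  set lo : Fin u → V → ℕ → ℝ := fun i x j =>
    if h : j < t then Cf i ⟨j,h⟩ + ∑ k, Af i ⟨j,h⟩ k * v x k else 0 with hlo
  set hi : Fin u → V → ℕ → ℝ := fun i y j =>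
    if h : j < t then -(∑ k, Bf i ⟨j,h⟩ k * v y k) else 0 with hhi
  have hDomIff : ∀ i x y, ((∀ j : Fin t, f i j (v x) (v y) < 0) ↔
      (∀ j < t, lo i x j < hi i y j)) := by
    intro i x y
    constructor
    · intro h j hj
      have h2 := h ⟨j, hj⟩
      rw [hABC] at h2
      simp only [hlo, hhi, dif_pos hj]
      linarith
    · intro h j
      have h2 := h j.1 j.2
      simp only [hlo, hhi, dif_pos j.2] at h2
      rw [hABC]
      simp only [Fin.eta] at h2
      linarith
  have hA' : ∀ T : Finset V, (∀ x ∈ T, ∀ y ∈ T, x ≠ y → G.Adj x y) → T.card ≤ n := by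
    intro T hT
    by_contra hc
    push_neg at hc
    obtain ⟨T', hT', hcard'⟩ := Finset.exists_subset_card_eq (le_of_lt hc)
    refine hnc T' ⟨?_, hcard'⟩
    intro x hx y hy hxy
    exact hT x (hT' (Finset.mem_coe.mp hx)) y (hT' (Finset.mem_coe.mp hy)) hxy
  have hB' : ∀ T : Finset V, (∀ x ∈ T, ∀ y ∈ T, x ≠ y → ¬ G.Adj x y) → T.card ≤ n := by
    intro T hT
    by_contra hc
    push_neg at hc
    obtain ⟨T', hT', hcard'⟩ := Finset.exists_subset_card_eq (le_of_lt hc)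
    refine hni T' ⟨?_, hcard'⟩
    intro x hx y hy hxy
    rw [SimpleGraph.compl_adj]
    exact ⟨hxy, hT x (hT' (Finset.mem_coe.mp hx)) y (hT' (Finset.mem_coe.mp hy)) hxy⟩
  have hrep : ∀ x ∈ (Finset.univ : Finset V), ∀ y ∈ (Finset.univ : Finset V), x ≠ y →
      (G.Adj x y ↔ ∃ i ∈ (Finset.univ : Finset (Fin u)),
        (∀ j < t, lo i x j < hi i y j) ∨ (∀ j < t, lo i y j < hi i x j)) := by
    intro x _ y _ hxy
    constructor
    · intro h
      obtain ⟨i, hfi⟩ := (hadj x y hxy).mp h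
      exact ⟨i, Finset.mem_univ i, Or.inl ((hDomIff i x y).mp hfi)⟩
    · rintro ⟨i, -, hd | hd⟩
      · exact (hadj x y hxy).mpr ⟨i, (hDomIff i x y).mpr hd⟩
      · exact ((hadj y x hxy.symm).mpr ⟨i, (hDomIff i y x).mpr hd⟩).symm
  have hNPhi := peel G u t n lo hi hA' hB' u Finset.univ Finset.univ (by simp) hrep
  rw [Finset.card_univ] at hNPhi
  set N := Fintype.card V with hNdef
  set c : ℕ := (Nat.log 2 (2 * N) + 2)^t with hc
  have hc1 : 1 ≤ c := Nat.one_le_pow _ _ (by omega)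
  have hn1 : 1 ≤ n := hn
  have hNnat : N ≤ (2*c*n)^E := by
    calc N ≤ PhiF c n u := hNPhi
    _ ≤ (2*c*n)^(2^(u+1) - 1) := phi_bound hc1 hn1 u
    _ ≤ (2*c*n)^E := Nat.pow_le_pow_right (by nlinarith) (Nat.sub_le _ _)
  -- positivity of N
  have hNpos : (0:ℝ) < (N:ℝ) := lt_of_le_of_lt (by positivity) hcard
  have hN1 : 1 ≤ N := by exact_mod_cast hNpos
  -- real versions
  set z : ℝ := Real.log (2*(N:ℝ)) with hz
  have h2N1 : (1:ℝ) < 2*(N:ℝ) := by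
    have : (1:ℝ) ≤ (N:ℝ) := by exact_mod_cast hN1
    linarith
  have hzpos : 0 < z := Real.log_pos h2N1
  have hlog2 : (0.6931471803 : ℝ) < Real.log 2 := Real.log_two_gt_d9
  have hlogle : (Nat.log 2 (2*N) : ℝ) * Real.log 2 ≤ z := by
    have hp : (2:ℕ)^(Nat.log 2 (2*N)) ≤ 2*N := Nat.pow_log_le_self 2 (by omega)
    have hpr : ((2:ℝ))^(Nat.log 2 (2*N)) ≤ 2*(N:ℝ) := by exact_mod_cast hp
    calc (Nat.log 2 (2*N) : ℝ) * Real.log 2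
        = Real.log ((2:ℝ)^(Nat.log 2 (2*N))) := (Real.log_pow _ _).symm
    _ ≤ z := Real.log_le_log (by positivity) hpr
  have hΛ : ((Nat.log 2 (2*N) + 2 : ℕ) : ℝ) ≤ 5 * z := by
    have hm0 : (0:ℝ) ≤ (Nat.log 2 (2*N) : ℝ) := by positivity
    have h1 : (Nat.log 2 (2*N) : ℝ) ≤ 2 * z := by nlinarith
    have hNr1 : (1:ℝ) ≤ (N:ℝ) := by exact_mod_cast hN1
    have hlz : Real.log 2 ≤ z := Real.log_le_log (by norm_num) (by linarith)
    have h2 : (2:ℝ) ≤ 3 * z := by nlinarith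
    push_cast
    linarith
  -- master real bound
  have hcast : (N:ℝ) ≤ (2 * ((Nat.log 2 (2*N) + 2 : ℕ):ℝ)^t * (n:ℝ))^E := by
    have := hNnat
    have hq : ((2*c*n : ℕ) : ℝ) = 2 * ((Nat.log 2 (2*N) + 2 : ℕ):ℝ)^t * (n:ℝ) := by
      rw [hc]; push_cast; ring
    calc (N:ℝ) ≤ (((2*c*n)^E : ℕ) : ℝ) := by exact_mod_cast hNnat
    _ = ((2*c*n : ℕ):ℝ)^E := by push_cast; ring
    _ = _ := by rw [hq]
  have step1 : (N:ℝ) ≤ 2^E * (5*z)^D * (n:ℝ)^E := by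
    have hbase : (0:ℝ) ≤ ((Nat.log 2 (2*N) + 2 : ℕ):ℝ) := by positivity
    have h5 : ((Nat.log 2 (2*N) + 2 : ℕ):ℝ)^t ≤ (5*z)^t := pow_le_pow_left₀ hbase hΛ t
    calc (N:ℝ) ≤ (2 * ((Nat.log 2 (2*N) + 2 : ℕ):ℝ)^t * (n:ℝ))^E := hcast
    _ = 2^E * (((Nat.log 2 (2*N) + 2 : ℕ):ℝ)^t)^E * (n:ℝ)^E := by rw [mul_pow, mul_pow]
    _ ≤ 2^E * ((5*z)^t)^E * (n:ℝ)^E := by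
        have h' : (((Nat.log 2 (2*N) + 2 : ℕ):ℝ)^t)^E ≤ ((5*z)^t)^E :=
          pow_le_pow_left₀ (by positivity) h5 E
        have hnE : (0:ℝ) ≤ (n:ℝ)^E := by positivity
        have h2E : (0:ℝ) ≤ (2:ℝ)^E := by positivity
        exact mul_le_mul_of_nonneg_right (mul_le_mul_of_nonneg_left h' h2E) hnE
    _ = 2^E * (5*z)^D * (n:ℝ)^E := by rw [← pow_mul, hD]
  -- z^D ≤ (2D)^D * sqrt(2N)
  have hzD : z^D ≤ (2*(D:ℝ))^D * Real.sqrt (2*(N:ℝ)) := by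
    set y : ℝ := 2*(N:ℝ) with hy
    have hy0 : (0:ℝ) < y := by linarith
    set γ : ℝ := 1/(2*(D:ℝ)) with hγ
    have hDr : (0:ℝ) < (D:ℝ) := by exact_mod_cast hD1
    have hγpos : 0 < γ := by rw [hγ]; positivity
    set w : ℝ := y ^ γ with hw
    have hwpos : 0 < w := Real.rpow_pos_of_pos hy0 γ
    have hlogw : Real.log w = γ * z := by rw [hw, Real.log_rpow hy0, hz, hy]
    have hzw : z = 2*(D:ℝ) * Real.log w := by
      rw [hlogw, hγ]
      field_simp
    have hlww : Real.log w ≤ w := le_trans (Real.log_le_sub_one_of_pos hwpos) (by linarith)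
    have hzle : z ≤ 2*(D:ℝ) * w := by
      rw [hzw]
      have : (0:ℝ) ≤ 2*(D:ℝ) := by linarith
      nlinarith
    have hpow : z^D ≤ (2*(D:ℝ)*w)^D := pow_le_pow_left₀ (le_of_lt hzpos) hzle D
    have hwD : w^D = Real.sqrt y := by
      rw [hw, ← Real.rpow_natCast (y ^ γ) D, ← Real.rpow_mul (le_of_lt hy0)]
      rw [Real.sqrt_eq_rpow]
      congr 1
      rw [hγ]
      field_simp
    calc z^D ≤ (2*(D:ℝ)*w)^D := hpow
    _ = (2*(D:ℝ))^D * w^D := mul_pow _ _ _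
    _ = (2*(D:ℝ))^D * Real.sqrt y := by rw [hwD]
  -- combine
  have hfinal : (N:ℝ) ≤ A * (n:ℝ)^E * Real.sqrt (2*(N:ℝ)) := by
    have h5D : (5*z)^D = 5^D * z^D := mul_pow _ _ _
    have hsq : (0:ℝ) ≤ Real.sqrt (2*(N:ℝ)) := Real.sqrt_nonneg _
    calc (N:ℝ) ≤ 2^E * (5*z)^D * (n:ℝ)^E := step1
    _ = 2^E * 5^D * z^D * (n:ℝ)^E := by rw [h5D]; ring
    _ ≤ 2^E * 5^D * ((2*(D:ℝ))^D * Real.sqrt (2*(N:ℝ))) * (n:ℝ)^E := by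
        have h25 : (0:ℝ) ≤ 2^E * 5^D := by positivity
        have hnE : (0:ℝ) ≤ (n:ℝ)^E := by positivity
        exact mul_le_mul_of_nonneg_right (mul_le_mul_of_nonneg_left hzD h25) hnE
    _ = A * (n:ℝ)^E * Real.sqrt (2*(N:ℝ)) := by rw [hA]; ring
  -- square and contradiction
  have hsq2 : Real.sqrt (2*(N:ℝ))^2 = 2*(N:ℝ) := Real.sq_sqrt (by linarith)
  have hNsq : (N:ℝ)^2 ≤ (A * (n:ℝ)^E)^2 * (2*(N:ℝ)) := by
    have h1 : (N:ℝ)^2 ≤ (A*(n:ℝ)^E * Real.sqrt (2*(N:ℝ)))^2 :=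
      pow_le_pow_left₀ hNpos.le hfinal 2
    have h2 : (A*(n:ℝ)^E * Real.sqrt (2*(N:ℝ)))^2 = (A*(n:ℝ)^E)^2 * (2*(N:ℝ)) := by
      rw [mul_pow, hsq2]
    linarith
  have hNle : (N:ℝ) ≤ 2 * A^2 * ((n:ℝ)^E)^2 := by
    have h3 : (N:ℝ) * (N:ℝ) ≤ (2 * A^2 * ((n:ℝ)^E)^2) * (N:ℝ) := by nlinarith [hNsq]
    exact le_of_mul_le_mul_right h3 hNpos
  -- but hcard says N > (2A²+1)·n^(2E)
  have hβ : (n:ℝ) ^ ((2*E : ℕ) : ℝ) = ((n:ℝ)^E)^2 := by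
    rw [Real.rpow_natCast, ← pow_mul]
    ring_nf
  rw [hβ] at hcard
  have hnE1 : (1:ℝ) ≤ ((n:ℝ)^E)^2 := by
    have h1 : (1:ℝ) ≤ (n:ℝ) := by exact_mod_cast hn1
    exact one_le_pow₀ (one_le_pow₀ h1)
  nlinarith [hcard, hNle, hnE1, sq_nonneg A]
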